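/- Let R be a ring, w : R → ℤ ∪ {∞} a filtration on R, and (σ, δ) a skew derivation on R satisfying w(σ(r) − r) ≥ w(r) + 1 and w(δ(r)) ≥ w(r) + 1 for all r ∈ R. Let I be a two-sided ideal of R with σ(I) = I and δ(I) ⊆ I, and let (σ̄, δ̄) be the induced skew derivation on the quotient ring R/I. Define the quotient filtration w̄ on R/I by w̄(r + I) = sup{w(r + y) : y ∈ I} (supremum in ℤ ∪ {∞}). Then w̄(σ̄(ξ) − ξ) ≥ w̄(ξ) + 1 and w̄(δ̄(ξ)) ≥ w̄(ξ) + 1 for every ξ ∈ R/I. -/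

import Mathlib

lemma stmt_16_aux (A B : Set (WithTop ℤ)) (hA : A.Nonempty)
    (h : ∀ a ∈ A, a + 1 ≤ sSup B) : sSup A + 1 ≤ sSup B := by
  cases hS : sSup B with
  | top => exact le_top
  | coe n =>
    have hle : sSup A ≤ ((n - 1 : ℤ) : WithTop ℤ) := by
      refine csSup_le hA fun a ha => ?_
      have := h a ha
      rw [hS] at this
      cases a with
      | top => simp at this
      | coe m =>
        have : ((m + 1 : ℤ) : WithTop ℤ) ≤ (n : WithTop ℤ) := by
          push_cast at this ⊢; exact this
        have : m + 1 ≤ n := WithTop.coe_le_coe.mp this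
        exact WithTop.coe_le_coe.mpr (by omega)
    calc sSup A + 1 ≤ ((n - 1 : ℤ) : WithTop ℤ) + 1 := add_le_add hle le_rfl
      _ = (n : WithTop ℤ) := by rw [← WithTop.coe_one, ← WithTop.coe_add]; norm_num

/-- Let `w` be a filtration on `R`, `(σ, δ)` a skew derivation compatible with `w`
(`w(σ(r) − r) ≥ w(r) + 1` and `w(δ(r)) ≥ w(r) + 1`), and `I` a two-sided ideal with
`σ(I) = I` and `δ(I) ⊆ I`.  Then the quotient filtration
`w̄(r + I) = sup{w(r + y) : y ∈ I}` on `R/I` satisfies `w̄(σ̄(ξ) − ξ) ≥ w̄(ξ) + 1` and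
`w̄(δ̄(ξ)) ≥ w̄(ξ) + 1` for every `ξ = r + I`. -/
theorem stmt_16 {R : Type*} [Ring R]
    (w : R → WithTop ℤ) (hw0 : w 0 = ⊤)
    (hwadd : ∀ x y : R, min (w x) (w y) ≤ w (x + y))
    (hwmul : ∀ x y : R, w x + w y ≤ w (x * y))
    (σ : R →+* R) (hσ : Function.Bijective σ)
    (δ : R → R) (hδadd : ∀ a b : R, δ (a + b) = δ a + δ b)
    (hleib : ∀ a b : R, δ (a * b) = δ a * b + σ a * δ b)
    (hcσ : ∀ r : R, w r + 1 ≤ w (σ r - r)) (hcδ : ∀ r : R, w r + 1 ≤ w (δ r))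
    (I : TwoSidedIdeal R)
    (hIσ : (fun x : R => σ x) '' (I : Set R) = (I : Set R))
    (hIδ : ∀ x ∈ I, δ x ∈ I) :
    ∀ r : R,
      sSup (w '' {s | ∃ y ∈ I, s = r + y}) + 1 ≤
        sSup (w '' {s | ∃ y ∈ I, s = σ r - r + y}) ∧
      sSup (w '' {s | ∃ y ∈ I, s = r + y}) + 1 ≤
        sSup (w '' {s | ∃ y ∈ I, s = δ r + y}) := by
  intro r
  have hAne : (w '' {s | ∃ y ∈ I, s = r + y}).Nonempty :=
    ⟨w (r + 0), ⟨r + 0, ⟨0, I.zero_mem, rfl⟩, rfl⟩⟩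
  have hσmem : ∀ y ∈ I, σ y ∈ I := by
    intro y hy
    have : σ y ∈ (fun x : R => σ x) '' (I : Set R) := ⟨y, hy, rfl⟩
    rw [hIσ] at this
    exact this
  constructor
  · refine stmt_16_aux _ _ hAne ?_
    rintro a ⟨s, ⟨y, hy, rfl⟩, rfl⟩
    have h1 : w (r + y) + 1 ≤ w (σ (r + y) - (r + y)) := hcσ (r + y)
    have h2 : σ (r + y) - (r + y) = σ r - r + (σ y - y) := by
      rw [map_add]; abel
    rw [h2] at h1
    refine h1.trans (le_csSup (OrderTop.bddAbove _) ?_)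
    exact ⟨σ r - r + (σ y - y), ⟨σ y - y, I.sub_mem (hσmem y hy) hy, rfl⟩, rfl⟩
  · refine stmt_16_aux _ _ hAne ?_
    rintro a ⟨s, ⟨y, hy, rfl⟩, rfl⟩
    have h1 : w (r + y) + 1 ≤ w (δ (r + y)) := hcδ (r + y)
    rw [hδadd] at h1
    refine h1.trans (le_csSup (OrderTop.bddAbove _) ?_)
    exact ⟨δ r + δ y, ⟨δ y, hIδ y hy, rfl⟩, rfl⟩
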